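/- Let G be a graph that is the union of six bipartite graphs G_{p,q} between pairs of parts from among six disjoint parts Y₁,…,Y₆ arranged as a K_{2,3}-pattern (parts {Y₁,Y₂} versus {Y₃,Y₄,Y₅}, giving the six pairs (Yᵢ,Yⱼ) with i∈{1,2}, j∈{3,4,5}). Suppose each G_{i,j} has at least 6 edges and has a vertex cover Iⱼ of size 2 contained in Yⱼ (the same Iⱼ for i=1,2), and let I = I₃∪I₄∪I₅ (six vertices). Then G contains a matching of size 6 saturating I, i.e., six pairwise disjoint edges each containing one vertex of I. -/

import Mathlib

set_option synthInstance.maxSize 1000 in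
set_option synthInstance.maxHeartbeats 400000 in
lemma sdr3 : ∀ (A B C : Finset (Fin 4)), 2 ≤ A.card → 2 ≤ B.card → 2 ≤ C.card →
    (A ≠ B ∨ B ≠ C ∨ 3 ≤ A.card) →
    ∃ x ∈ A, ∃ y ∈ B, ∃ z ∈ C, x ≠ y ∧ x ≠ z ∧ y ≠ z := by decide

/-- the core combinatorial conclusion about neighborhood systems -/
def Concl (N : Fin 2 → Fin 3 → Fin 2 → Finset (Fin 4)) : Prop :=
  ∃ p : Fin 3 → Fin 2 → Fin 2 × Fin 4, (∀ j s, (p j s).2 ∈ N (p j s).1 j s) ∧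
    Function.Injective (fun js : Fin 3 × Fin 2 => p js.1 js.2)

def GA (N : Fin 2 → Fin 3 → Fin 2 → Finset (Fin 4)) (i s : Fin 2) : Prop :=
  N i 0 s ≠ N i 1 s ∨ N i 1 s ≠ N i 2 s ∨ 3 ≤ (N i 0 s).card

lemma fin2_cases : ∀ s : Fin 2, s = 0 ∨ s = 1 := by decide

lemma good (N : Fin 2 → Fin 3 → Fin 2 → Finset (Fin 4))
    (h2 : ∀ i j s, 2 ≤ (N i j s).card)
    (hgA : GA N 0 0) (hgB : GA N 1 1) : Concl N := by
  obtain ⟨x0, hx0, x1, hx1, x2, hx2, h01, h02, h12⟩ :=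
    sdr3 _ _ _ (h2 0 0 0) (h2 0 1 0) (h2 0 2 0) hgA
  obtain ⟨z0, hz0, z1, hz1, z2, hz2, g01, g02, g12⟩ :=
    sdr3 _ _ _ (h2 1 0 1) (h2 1 1 1) (h2 1 2 1) hgB
  refine ⟨fun j s => if s = 0 then (0, ![x0, x1, x2] j) else (1, ![z0, z1, z2] j), ?_, ?_⟩
  · intro j s
    fin_cases j <;> fin_cases s <;> simpa using (by assumption)
  · intro ⟨j, s⟩ ⟨j', s'⟩ h
    fin_cases j <;> fin_cases s <;> fin_cases j' <;> fin_cases s' <;>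
      simp_all [Prod.ext_iff]

lemma trans_i (N : Fin 2 → Fin 3 → Fin 2 → Finset (Fin 4))
    (h : Concl (fun i j s => N (1 - i) j s)) : Concl N := by
  obtain ⟨p, hp, hinj⟩ := h
  refine ⟨fun j s => (1 - (p j s).1, (p j s).2), ?_, ?_⟩
  · intro j s
    have := hp j s
    simpa using this
  · intro ⟨j, s⟩ ⟨j', s'⟩ h
    apply hinj
    simp only [Prod.ext_iff] at h ⊢
    obtain ⟨h1, h2⟩ := h
    refine ⟨?_, h2⟩
    have : ∀ a b : Fin 2, 1 - a = 1 - b → a = b := by decide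
    exact this _ _ h1

lemma trans_s (N : Fin 2 → Fin 3 → Fin 2 → Finset (Fin 4))
    (h : Concl (fun i j s => N i j (1 - s))) : Concl N := by
  obtain ⟨p, hp, hinj⟩ := h
  refine ⟨fun j s => p j (1 - s), ?_, ?_⟩
  · intro j s
    have := hp j (1 - s)
    have hss : ∀ s : Fin 2, 1 - (1 - s) = s := by decide
    simpa [hss] using this
  · intro ⟨j, s⟩ ⟨j', s'⟩ h
    have h' := hinj (a₁ := (j, 1 - s)) (a₂ := (j', 1 - s')) h
    simp only [Prod.ext_iff] at h' ⊢
    obtain ⟨h1, h2⟩ := h'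
    have : ∀ a b : Fin 2, 1 - a = 1 - b → a = b := by decide
    exact ⟨h1, this _ _ h2⟩

lemma special (N : Fin 2 → Fin 3 → Fin 2 → Finset (Fin 4))
    (h2 : ∀ i j s, 2 ≤ (N i j s).card)
    (hsum : ∀ i j, 6 ≤ (N i j 0).card + (N i j 1).card)
    (hle : ∀ i j s, (N i j s).card ≤ 4)
    (hP0 : ¬ GA N 0 0) (hP1 : ¬ GA N 1 0) : Concl N := by
  rw [GA] at hP0 hP1
  push_neg at hP0 hP1
  obtain ⟨e00, e01, hc0⟩ := hP0
  obtain ⟨e10, e11, hc1⟩ := hP1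
  have c00 : (N 0 0 0).card = 2 := by have := h2 0 0 0; omega
  have c01 : (N 0 1 0).card = 2 := by rw [← e00]; exact c00
  have c02 : (N 0 2 0).card = 2 := by rw [← e01]; exact c01
  have c10 : (N 1 0 0).card = 2 := by have := h2 1 0 0; omega
  have c11 : (N 1 1 0).card = 2 := by rw [← e10]; exact c10
  have c12 : (N 1 2 0).card = 2 := by rw [← e11]; exact c11
  -- N i j 1 is full
  have hfull : ∀ i j, N i j 1 = Finset.univ := by
    intro i j
    apply Finset.eq_univ_of_card
    have hs := hsum i j
    have hl := hle i j 1
    have hc : (N i j 0).card = 2 := by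
      fin_cases i <;> fin_cases j <;>
        first | exact c00 | exact c01 | exact c02 | exact c10 | exact c11 | exact c12
    simp only [Fintype.card_fin]
    omega
  obtain ⟨s1, s2, hs12, hS⟩ := Finset.card_eq_two.mp c00
  obtain ⟨t1, t2, ht12, hT⟩ := Finset.card_eq_two.mp c10
  obtain ⟨c1, c2, hc12, hC⟩ : ∃ c1 c2, c1 ≠ c2 ∧ Finset.univ \ N 0 0 0 = {c1, c2} := by
    apply Finset.card_eq_two.mp
    rw [Finset.card_sdiff_of_subset (Finset.subset_univ _)]
    simp [c00]
  have hs1 : s1 ∈ N 0 0 0 := by rw [hS]; simp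
  have hs2 : s2 ∈ N 0 0 0 := by rw [hS]; simp
  have hc1 : c1 ∉ N 0 0 0 := by
    have : c1 ∈ Finset.univ \ N 0 0 0 := by rw [hC]; simp
    simpa using this
  have hc2 : c2 ∉ N 0 0 0 := by
    have : c2 ∈ Finset.univ \ N 0 0 0 := by rw [hC]; simp
    simpa using this
  have m1 : s1 ∈ N 0 0 0 := hs1
  have m2 : s2 ∈ N 0 1 0 := by rw [← e00]; exact hs2
  have m3 : t1 ∈ N 1 2 0 := by rw [← e11, ← e10, hT]; simp
  have m4 : c1 ∈ N 0 0 1 := by rw [hfull]; exact Finset.mem_univ _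
  have m5 : c2 ∈ N 0 1 1 := by rw [hfull]; exact Finset.mem_univ _
  have m6 : t2 ∈ N 1 2 1 := by rw [hfull]; exact Finset.mem_univ _
  have n1 : s1 ≠ c1 := fun h => hc1 (h ▸ hs1)
  have n2 : s1 ≠ c2 := fun h => hc2 (h ▸ hs1)
  have n3 : s2 ≠ c1 := fun h => hc1 (h ▸ hs2)
  have n4 : s2 ≠ c2 := fun h => hc2 (h ▸ hs2)
  refine ⟨fun j s => if s = 0 then ![(0, s1), (0, s2), (1, t1)] j
                     else ![(0, c1), (0, c2), (1, t2)] j, ?_, ?_⟩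
  · intro j s
    fin_cases j <;> fin_cases s <;>
      first | exact m1 | exact m2 | exact m3 | exact m4 | exact m5 | exact m6
  · intro ⟨j, s⟩ ⟨j', s'⟩ h
    fin_cases j <;> fin_cases s <;> fin_cases j' <;> fin_cases s' <;>
      simp_all [Prod.ext_iff]

lemma core (N : Fin 2 → Fin 3 → Fin 2 → Finset (Fin 4))
    (h2 : ∀ i j s, 2 ≤ (N i j s).card)
    (hsum : ∀ i j, 6 ≤ (N i j 0).card + (N i j 1).card)
    (hle : ∀ i j s, (N i j s).card ≤ 4) : Concl N := by
  -- fullness from badness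
  have hfull : ∀ i s s', s ≠ s' → ¬ GA N i s → ∀ j, N i j s' = Finset.univ := by
    intro i s s' hss hP j
    rw [GA] at hP
    push_neg at hP
    obtain ⟨e0, e1, hcc⟩ := hP
    have d0 : (N i 0 s).card = 2 := by have := h2 i 0 s; omega
    have d1 : (N i 1 s).card = 2 := by rw [← e0]; exact d0
    have d2 : (N i 2 s).card = 2 := by rw [← e1]; exact d1
    have hcj : (N i j s).card = 2 := by
      fin_cases j <;> first | exact d0 | exact d1 | exact d2
    apply Finset.eq_univ_of_card
    have hs6 : 6 ≤ (N i j s).card + (N i j s').card := by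
      rcases fin2_cases s with rfl | rfl <;> rcases fin2_cases s' with rfl | rfl
      · exact absurd rfl hss
      · exact hsum i j
      · have := hsum i j; omega
      · exact absurd rfl hss
    have := hle i j s'
    simp only [Fintype.card_fin]
    omega
  by_cases g1 : GA N 0 0 ∧ GA N 1 1
  · exact good N h2 g1.1 g1.2
  by_cases g2 : GA N 1 0 ∧ GA N 0 1
  · apply trans_i
    exact good _ (fun i j s => h2 (1 - i) j s)
      (by simpa [GA] using g2.1) (by simpa [GA] using g2.2)
  by_cases pa0 : GA N 0 0
  · have pb1 : ¬ GA N 1 1 := fun h => g1 ⟨pa0, h⟩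
    by_cases pb0 : GA N 1 0
    · have pa1 : ¬ GA N 0 1 := fun h => g2 ⟨pb0, h⟩
      apply trans_s
      apply special (fun i j s => N i j (1 - s)) (fun i j s => h2 i j (1 - s))
      · intro i j
        have := hsum i j
        show 6 ≤ (N i j (1 - 0)).card + (N i j (1 - 1)).card
        norm_num
        omega
      · intro i j s
        exact hle i j (1 - s)
      · show ¬ GA (fun i j s => N i j (1 - s)) 0 0
        simpa [GA] using pa1
      · show ¬ GA (fun i j s => N i j (1 - s)) 1 0
        simpa [GA] using pb1
    · -- ¬ GA N 1 0 and ¬ GA N 1 1: contradiction on side 1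
      exfalso
      have hf := hfull 1 0 1 (by decide) pb0 0
      rw [GA] at pb1
      push_neg at pb1
      have := pb1.2.2
      rw [hf] at this
      simp [Finset.card_univ] at this
  · by_cases pb0 : GA N 1 0
    · have pa1 : ¬ GA N 0 1 := fun h => g2 ⟨pb0, h⟩
      exfalso
      have hf := hfull 0 0 1 (by decide) pa0 0
      rw [GA] at pa1
      push_neg at pa1
      have := pa1.2.2
      rw [hf] at this
      simp [Finset.card_univ] at this
    · exact special N h2 hsum hle pa0 pb0

theorem stmt_13 (G : Fin 2 → Fin 3 → Finset (Fin 4 × Fin 4))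
    (I : Fin 3 → Finset (Fin 4))
    (hIcard : ∀ j, (I j).card = 2)
    (hGcard : ∀ i j, 6 ≤ (G i j).card)
    (hcover : ∀ i j, ∀ e ∈ G i j, e.2 ∈ I j) :
    ∃ m : Fin 6 → (Fin 2 × Fin 4) × (Fin 3 × Fin 4),
      (∀ k, ((m k).1.2, (m k).2.2) ∈ G (m k).1.1 (m k).2.1) ∧
      (∀ k, (m k).2.2 ∈ I (m k).2.1) ∧
      (∀ k l, k ≠ l → (m k).1 ≠ (m l).1 ∧ (m k).2 ≠ (m l).2) := by
  have habs : ∀ j, ∃ x y : Fin 4, x ≠ y ∧ I j = {x, y} := fun j =>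
    Finset.card_eq_two.mp (hIcard j)
  choose a b hab hI using habs
  set ab : Fin 3 → Fin 2 → Fin 4 := fun j s => if s = 0 then a j else b j with hab_def
  set N : Fin 2 → Fin 3 → Fin 2 → Finset (Fin 4) :=
    fun i j s => Finset.univ.filter (fun x => (x, ab j s) ∈ G i j) with hN_def
  have hmemN : ∀ i j s x, x ∈ N i j s ↔ (x, ab j s) ∈ G i j := by
    intro i j s x; simp [hN_def]
  have hle : ∀ i j s, (N i j s).card ≤ 4 := by
    intro i j s
    calc (N i j s).card ≤ (Finset.univ : Finset (Fin 4)).card := Finset.card_filter_le _ _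
    _ = 4 := by simp
  have hsum : ∀ i j, 6 ≤ (N i j 0).card + (N i j 1).card := by
    intro i j
    have hsplit := Finset.card_filter_add_card_filter_not
      (s := G i j) (p := fun e => e.2 = ab j 0)
    have h1 : ((G i j).filter (fun e => e.2 = ab j 0)).card ≤ (N i j 0).card := by
      apply Finset.card_le_card_of_injOn Prod.fst
      · intro e he
        rw [Finset.mem_coe, Finset.mem_filter] at he
        rw [Finset.mem_coe, hmemN]
        rw [← he.2]
        exact he.1
      · intro e1 h1 e2 h2 h
        simp only [Finset.mem_coe, Finset.mem_filter] at h1 h2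
        exact Prod.ext h (h1.2.trans h2.2.symm)
    have h2 : ((G i j).filter (fun e => ¬ e.2 = ab j 0)).card ≤ (N i j 1).card := by
      apply Finset.card_le_card_of_injOn Prod.fst
      · intro e he
        rw [Finset.mem_coe, Finset.mem_filter] at he
        have hmem := hcover i j e he.1
        rw [hI j] at hmem
        have he2 : e.2 = ab j 1 := by
          simp only [Finset.mem_insert, Finset.mem_singleton] at hmem
          rcases hmem with h | h
          · exact absurd (h.trans (by simp [hab_def])) he.2
          · simp [hab_def, h]
        rw [Finset.mem_coe, hmemN, ← he2]
        exact he.1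
      · intro e1 h1 e2 h2 h
        simp only [Finset.mem_coe, Finset.mem_filter] at h1 h2
        have hmem1 := hcover i j e1 h1.1
        have hmem2 := hcover i j e2 h2.1
        rw [hI j] at hmem1 hmem2
        simp only [Finset.mem_insert, Finset.mem_singleton] at hmem1 hmem2
        have hb1 : e1.2 = b j := by
          rcases hmem1 with h | h
          · exact absurd (h.trans (by simp [hab_def])) h1.2
          · exact h
        have hb2 : e2.2 = b j := by
          rcases hmem2 with h | h
          · exact absurd (h.trans (by simp [hab_def])) h2.2
          · exact h
        exact Prod.ext h (hb1.trans hb2.symm)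
    have := hGcard i j
    omega
  have h2 : ∀ i j s, 2 ≤ (N i j s).card := by
    intro i j s
    have := hsum i j
    have h0 := hle i j 0
    have h1 := hle i j 1
    rcases fin2_cases s with rfl | rfl <;> omega
  obtain ⟨p, hp, hinj⟩ := core N h2 hsum hle
  set q : Fin 6 → Fin 3 × Fin 2 := ![(0,0),(1,0),(2,0),(0,1),(1,1),(2,1)] with hq_def
  have hqinj : Function.Injective q := by decide
  have habinj : ∀ j (s s' : Fin 2), ab j s = ab j s' → s = s' := by
    intro j s s' h
    have h1 : ∀ x : Fin 2, x ≠ 0 → x = 1 := by decide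
    by_cases hs : s = 0 <;> by_cases hs' : s' = 0 <;>
      simp_all [hab_def] <;>
      [exact absurd h.symm (hab j); (fin_cases s <;> fin_cases s' <;> simp_all)]
  refine ⟨fun k => (p (q k).1 (q k).2, ((q k).1, ab (q k).1 (q k).2)), ?_, ?_, ?_⟩
  · intro k
    have := hp (q k).1 (q k).2
    rw [hmemN] at this
    exact this
  · intro k
    show ab (q k).1 (q k).2 ∈ I (q k).1
    rw [hI]
    by_cases h : (q k).2 = 0 <;> simp [hab_def, h]
  · intro k l hkl
    have hqkl : q k ≠ q l := fun h => hkl (hqinj h)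
    constructor
    · intro h
      exact hqkl (hinj h)
    · intro h
      have h' : ((q k).1, ab (q k).1 (q k).2) = ((q l).1, ab (q l).1 (q l).2) := h
      rw [Prod.mk.injEq] at h'
      obtain ⟨h1, h2⟩ := h'
      rw [h1] at h2
      exact hqkl (Prod.ext h1 (habinj _ _ _ h2))
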